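/- arXiv:1204.0699 — 2 statements merged into one kernel-verified Lean document; each statement's English description precedes it below -/
import Mathlib

section
/- Let A be a commutative ring, M a commutative monoid, and α : M → (A,·) a monoid homomorphism into the multiplicative monoid of A. Regard A as a ℤ[M]-algebra via α and ℤ[M^gp] as a ℤ[M]-algebra via the canonical map M → M^gp. Then the commutative ring ℤ[M^gp] ⊗_{ℤ[M]} A, with its canonical map from A, is the localization of A at the submonoid α(M) of (A,·); that is, IsLocalization holds for the image submonoid of α and the A-algebra ℤ[M^gp] ⊗_{ℤ[M]} A. -/
open TensorProduct

/-- The group completion (Grothendieck group) of a commutative monoid `M`, realized as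
the localization of `M` at the top submonoid, together with its canonical map. -/
abbrev GroupCompletion (M : Type*) [CommMonoid M] := Localization (⊤ : Submonoid M)

/-- The canonical map `M → M^gp` into the group completion. -/
noncomputable def toGroupCompletion (M : Type*) [CommMonoid M] : M →* GroupCompletion M :=
  (Localization.monoidOf (⊤ : Submonoid M)).toMonoidHom

/-- For a pre-log ring `(A, M, α)`, the ring `ℤ[M^gp] ⊗_{ℤ[M]} A`, with
its canonical map from `A`, is the localization of `A` at the image submonoid `α(M)` of
the multiplicative monoid of `A`. -/
theorem prelog_pushout_is_localization_at_image (A : Type*) [CommRing A]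
    (M : Type*) [CommMonoid M] (α : M →* A) :
    letI : Algebra (MonoidAlgebra ℤ M) A := ((MonoidAlgebra.lift ℤ A M) α).toRingHom.toAlgebra
    letI : Algebra (MonoidAlgebra ℤ M) (MonoidAlgebra ℤ (GroupCompletion M)) :=
      (MonoidAlgebra.mapDomainRingHom ℤ (toGroupCompletion M)).toAlgebra
    letI : Algebra A (MonoidAlgebra ℤ (GroupCompletion M) ⊗[MonoidAlgebra ℤ M] A) :=
      (Algebra.TensorProduct.includeRight (R := MonoidAlgebra ℤ M)
        (A := MonoidAlgebra ℤ (GroupCompletion M)) (B := A)).toRingHom.toAlgebra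
    IsLocalization (MonoidHom.mrange α)
      (MonoidAlgebra ℤ (GroupCompletion M) ⊗[MonoidAlgebra ℤ M] A) := by
  letI instRA : Algebra (MonoidAlgebra ℤ M) A := ((MonoidAlgebra.lift ℤ A M) α).toRingHom.toAlgebra
  letI instRB : Algebra (MonoidAlgebra ℤ M) (MonoidAlgebra ℤ (GroupCompletion M)) :=
    (MonoidAlgebra.mapDomainRingHom ℤ (toGroupCompletion M)).toAlgebra
  letI instAT : Algebra A (MonoidAlgebra ℤ (GroupCompletion M) ⊗[MonoidAlgebra ℤ M] A) :=
    (Algebra.TensorProduct.includeRight (R := MonoidAlgebra ℤ M)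
      (A := MonoidAlgebra ℤ (GroupCompletion M)) (B := A)).toRingHom.toAlgebra
  classical
  set R := MonoidAlgebra ℤ M with hR
  set B := MonoidAlgebra ℤ (GroupCompletion M) with hB
  set Loc := Localization (MonoidHom.mrange α) with hLoc
  have hRA : ∀ m : M, algebraMap R A (MonoidAlgebra.of ℤ M m) = α m := by
    intro m
    show (MonoidAlgebra.lift ℤ A M α) (MonoidAlgebra.of ℤ M m) = α m
    simp
  have hRB : ∀ m : M, algebraMap R B (MonoidAlgebra.of ℤ M m)
      = MonoidAlgebra.of ℤ (GroupCompletion M) (toGroupCompletion M m) := by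
    intro m
    show MonoidAlgebra.mapDomainRingHom ℤ (toGroupCompletion M) (MonoidAlgebra.of ℤ M m) = _
    simp [MonoidAlgebra.of_apply]
  have hf : ∀ a : A, algebraMap A (B ⊗[R] A) a = (1 : B) ⊗ₜ[R] a := fun a => rfl
  have hsmul : ∀ (m : M) (b : B) (a : A),
      (MonoidAlgebra.of ℤ (GroupCompletion M) (toGroupCompletion M m) * b) ⊗ₜ[R] a
        = b ⊗ₜ[R] (α m * a) := by
    intro m b a
    have h1 : MonoidAlgebra.of ℤ (GroupCompletion M) (toGroupCompletion M m) * b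
        = (MonoidAlgebra.of ℤ M m) • b := by
      rw [Algebra.smul_def, hRB]
    have h2 : α m * a = (MonoidAlgebra.of ℤ M m) • a := by
      rw [Algebra.smul_def, hRA]
    rw [h1, h2, TensorProduct.smul_tmul]
  -- elements of the image of M are invertible in the group completion
  have hunit : ∀ m : M, IsUnit (toGroupCompletion M m) := by
    intro m
    refine isUnit_iff_exists_inv.2 ⟨Localization.mk 1 ⟨m, Submonoid.mem_top m⟩, ?_⟩
    rw [show toGroupCompletion M m = Localization.mk m 1 from (Localization.mk_one_eq_monoidOf_mk m).symm]
    rw [Localization.mk_mul, mul_one, one_mul]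
    exact Localization.mk_self (⟨m, Submonoid.mem_top m⟩ : (⊤ : Submonoid M))
  -- the image of α(M) in the tensor product consists of units
  have hmapu : ∀ m : M, IsUnit (algebraMap A (B ⊗[R] A) (α m)) := by
    intro m
    have h1 : algebraMap A (B ⊗[R] A) (α m)
        = (MonoidAlgebra.of ℤ (GroupCompletion M) (toGroupCompletion M m)) ⊗ₜ[R] (1 : A) := by
      rw [hf]
      calc (1 : B) ⊗ₜ[R] (α m) = (1 : B) ⊗ₜ[R] (α m * 1) := by rw [mul_one]
        _ = (MonoidAlgebra.of ℤ (GroupCompletion M) (toGroupCompletion M m) * 1) ⊗ₜ[R] (1 : A) :=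
            (hsmul m 1 1).symm
        _ = (MonoidAlgebra.of ℤ (GroupCompletion M) (toGroupCompletion M m)) ⊗ₜ[R] (1 : A) := by
            rw [mul_one]
    rw [h1]
    have h2 : (MonoidAlgebra.of ℤ (GroupCompletion M) (toGroupCompletion M m)) ⊗ₜ[R] (1 : A)
        = Algebra.TensorProduct.includeLeftRingHom
            (MonoidAlgebra.of ℤ (GroupCompletion M) (toGroupCompletion M m)) := rfl
    rw [h2]
    exact ((hunit m).map (MonoidAlgebra.of ℤ (GroupCompletion M))).map _
  -- key multiplication fact in the group completion
  have hmk : ∀ (m₁ : M) (s : (⊤ : Submonoid M)),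
      toGroupCompletion M (s : M) * Localization.mk m₁ s = toGroupCompletion M m₁ := by
    intro m₁ s
    simp only [show ∀ x : M, toGroupCompletion M x = Localization.mk x 1 from fun x => (Localization.mk_one_eq_monoidOf_mk x).symm]
    rw [Localization.mk_mul, Localization.mk_eq_mk_iff, Localization.r_iff_exists]
    exact ⟨1, by simp [mul_comm, mul_assoc, mul_left_comm]⟩
  -- surjectivity claim
  have claimB : ∀ (b : B) (a : A), ∃ (m : M) (a' : A),
      (b ⊗ₜ[R] a) * ((1 : B) ⊗ₜ[R] (α m)) = (1 : B) ⊗ₜ[R] a' := by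
    intro b
    induction b using MonoidAlgebra.induction_on with
    | of g =>
      intro a
      induction g using Localization.induction_on with
      | H p =>
        obtain ⟨m₁, s⟩ := p
        refine ⟨(s : M), α m₁ * a, ?_⟩
        calc (MonoidAlgebra.of ℤ (GroupCompletion M) (Localization.mk m₁ s) ⊗ₜ[R] a)
              * ((1 : B) ⊗ₜ[R] (α (s : M)))
            = (MonoidAlgebra.of ℤ (GroupCompletion M) (Localization.mk m₁ s) * 1)
                ⊗ₜ[R] (a * α (s : M)) := Algebra.TensorProduct.tmul_mul_tmul _ _ _ _
          _ = MonoidAlgebra.of ℤ (GroupCompletion M) (Localization.mk m₁ s)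
                ⊗ₜ[R] (α (s : M) * a) := by rw [mul_one, mul_comm a]
          _ = (MonoidAlgebra.of ℤ (GroupCompletion M) (toGroupCompletion M (s : M))
                * MonoidAlgebra.of ℤ (GroupCompletion M) (Localization.mk m₁ s)) ⊗ₜ[R] a :=
              (hsmul (s : M) _ a).symm
          _ = MonoidAlgebra.of ℤ (GroupCompletion M) (toGroupCompletion M m₁) ⊗ₜ[R] a := by
              rw [← map_mul, hmk]
          _ = (MonoidAlgebra.of ℤ (GroupCompletion M) (toGroupCompletion M m₁) * 1) ⊗ₜ[R] a := by
              rw [mul_one]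
          _ = (1 : B) ⊗ₜ[R] (α m₁ * a) := hsmul m₁ 1 a
    | add b₁ b₂ ih₁ ih₂ =>
      intro a
      obtain ⟨m₁, a₁, h₁⟩ := ih₁ a
      obtain ⟨m₂, a₂, h₂⟩ := ih₂ a
      refine ⟨m₁ * m₂, a₁ * α m₂ + a₂ * α m₁, ?_⟩
      have hmul : (1 : B) ⊗ₜ[R] (α (m₁ * m₂))
          = ((1 : B) ⊗ₜ[R] (α m₁)) * ((1 : B) ⊗ₜ[R] (α m₂)) := by
        rw [Algebra.TensorProduct.tmul_mul_tmul, one_mul, map_mul]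
      rw [TensorProduct.add_tmul, hmul]
      calc (b₁ ⊗ₜ[R] a + b₂ ⊗ₜ[R] a) * (((1 : B) ⊗ₜ[R] (α m₁)) * ((1 : B) ⊗ₜ[R] (α m₂)))
          = (b₁ ⊗ₜ[R] a * ((1 : B) ⊗ₜ[R] (α m₁))) * ((1 : B) ⊗ₜ[R] (α m₂))
            + (b₂ ⊗ₜ[R] a * ((1 : B) ⊗ₜ[R] (α m₂))) * ((1 : B) ⊗ₜ[R] (α m₁)) := by ring
        _ = ((1 : B) ⊗ₜ[R] a₁) * ((1 : B) ⊗ₜ[R] (α m₂))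
            + ((1 : B) ⊗ₜ[R] a₂) * ((1 : B) ⊗ₜ[R] (α m₁)) := by rw [h₁, h₂]
        _ = (1 : B) ⊗ₜ[R] (a₁ * α m₂ + a₂ * α m₁) := by
            rw [Algebra.TensorProduct.tmul_mul_tmul, Algebra.TensorProduct.tmul_mul_tmul,
              one_mul, TensorProduct.tmul_add]
    | smul r b ih =>
      intro a
      obtain ⟨m, a', h⟩ := ih (r • a)
      refine ⟨m, a', ?_⟩
      have : (r • b) ⊗ₜ[R] a = b ⊗ₜ[R] (r • a) := TensorProduct.smul_tmul r b a
      rw [this, h]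
  have claim : ∀ z : B ⊗[R] A, ∃ (m : M) (a' : A),
      z * ((1 : B) ⊗ₜ[R] (α m)) = (1 : B) ⊗ₜ[R] a' := by
    intro z
    induction z using TensorProduct.induction_on with
    | zero => exact ⟨1, 0, by simp⟩
    | tmul b a => exact claimB b a
    | add z₁ z₂ ih₁ ih₂ =>
      obtain ⟨m₁, a₁, h₁⟩ := ih₁
      obtain ⟨m₂, a₂, h₂⟩ := ih₂
      refine ⟨m₁ * m₂, a₁ * α m₂ + a₂ * α m₁, ?_⟩
      have hmul : (1 : B) ⊗ₜ[R] (α (m₁ * m₂))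
          = ((1 : B) ⊗ₜ[R] (α m₁)) * ((1 : B) ⊗ₜ[R] (α m₂)) := by
        rw [Algebra.TensorProduct.tmul_mul_tmul, one_mul, map_mul]
      rw [hmul]
      calc (z₁ + z₂) * (((1 : B) ⊗ₜ[R] (α m₁)) * ((1 : B) ⊗ₜ[R] (α m₂)))
          = (z₁ * ((1 : B) ⊗ₜ[R] (α m₁))) * ((1 : B) ⊗ₜ[R] (α m₂))
            + (z₂ * ((1 : B) ⊗ₜ[R] (α m₂))) * ((1 : B) ⊗ₜ[R] (α m₁)) := by ring
        _ = ((1 : B) ⊗ₜ[R] a₁) * ((1 : B) ⊗ₜ[R] (α m₂))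
            + ((1 : B) ⊗ₜ[R] a₂) * ((1 : B) ⊗ₜ[R] (α m₁)) := by rw [h₁, h₂]
        _ = (1 : B) ⊗ₜ[R] (a₁ * α m₂ + a₂ * α m₁) := by
            rw [Algebra.TensorProduct.tmul_mul_tmul, Algebra.TensorProduct.tmul_mul_tmul,
              one_mul, TensorProduct.tmul_add]
  -- the comparison map to the actual localization, for injectivity
  haveI instTower : IsScalarTower R A Loc := IsScalarTower.of_algebraMap_eq fun r => rfl
  let g0 : M →* Loc := ((algebraMap A Loc) : A →+* Loc).toMonoidHom.comp α
  have hg0 : ∀ y : (⊤ : Submonoid M), IsUnit (g0 y) := fun y =>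
    IsLocalization.map_units (M := MonoidHom.mrange α) Loc ⟨α y, ⟨(y : M), rfl⟩⟩
  let ghat : GroupCompletion M →* Loc := (Localization.monoidOf (⊤ : Submonoid M)).lift hg0
  have hghat : ∀ m : M, ghat (toGroupCompletion M m) = algebraMap A Loc (α m) := fun m => by
    unfold toGroupCompletion; exact (Localization.monoidOf (⊤ : Submonoid M)).lift_eq hg0 m
  let β0 : B →ₐ[ℤ] Loc := MonoidAlgebra.lift ℤ Loc (GroupCompletion M) ghat
  have hβ0 : ∀ gp : GroupCompletion M,
      β0 (MonoidAlgebra.of ℤ (GroupCompletion M) gp) = ghat gp := fun gp =>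
    MonoidAlgebra.lift_of ghat gp
  have hcomm : ∀ r : R, β0 (algebraMap R B r) = algebraMap R Loc r := by
    have key : (β0.toRingHom.comp (algebraMap R B)) = (algebraMap R Loc) := by
      apply MonoidAlgebra.ringHom_ext
      · intro b
        have h1 : (MonoidAlgebra.single (1 : M) (b : ℤ) : R) = ((b : ℤ) : R) :=
          (MonoidAlgebra.intCast_def (b : ℤ)).symm
        rw [h1, map_intCast, map_intCast]
      · intro m
        show β0 (algebraMap R B (MonoidAlgebra.of ℤ M m)) = algebraMap R Loc (MonoidAlgebra.of ℤ M m)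
        rw [hRB, hβ0, hghat, IsScalarTower.algebraMap_apply R A Loc, hRA]
    intro r
    exact RingHom.congr_fun key r
  let β : B →ₐ[R] Loc := { toRingHom := β0.toRingHom, commutes' := hcomm }
  let ψ : (B ⊗[R] A) →ₐ[R] Loc :=
    Algebra.TensorProduct.lift β (IsScalarTower.toAlgHom R A Loc) (fun _ _ => Commute.all _ _)
  have hψ : ∀ a : A, ψ ((1 : B) ⊗ₜ[R] a) = algebraMap A Loc a := by
    intro a
    show β 1 * (IsScalarTower.toAlgHom R A Loc) a = algebraMap A Loc a
    rw [map_one, one_mul]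
    rfl
  -- assemble
  refine ⟨fun y => ?_, fun z => ?_, fun {x y} h => ?_⟩
  · obtain ⟨m, hm⟩ := y.2
    rw [← hm]
    exact hmapu m
  · obtain ⟨m, a', hz⟩ := claim z
    exact ⟨(a', ⟨α m, ⟨m, rfl⟩⟩), hz⟩
  · have h' : algebraMap A Loc x = algebraMap A Loc y := by
      have hx := congrArg ψ h
      rw [hf, hf, hψ, hψ] at hx
      exact hx
    exact IsLocalization.exists_of_eq (M := MonoidHom.mrange α) h'
end

section
/- Let A be an integral domain and let M = A∖{0} be the submonoid of nonzero elements of the multiplicative monoid (A,·). Regard A as a ℤ[M]-algebra via the inclusion M → A and ℤ[M^gp] as a ℤ[M]-algebra via the group-completion map M → M^gp. Then the canonical map A → ℤ[M^gp] ⊗_{ℤ[M]} A exhibits the tensor product as a fraction field of A; that is, ℤ[M^gp] ⊗_{ℤ[M]} A together with this map satisfies IsFractionRing A (ℤ[M^gp] ⊗_{ℤ[M]} A). -/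
open TensorProduct

/-- The submonoid `A ∖ {0}` of the multiplicative monoid of an integral domain `A`. -/
def nonzeroSubmonoid (A : Type*) [CommRing A] [IsDomain A] : Submonoid A where
  carrier := {a : A | a ≠ 0}
  one_mem' := one_ne_zero
  mul_mem' := fun ha hb => mul_ne_zero ha hb

section Aux

variable (M : Type*) [CommMonoid M]

lemma gc_exists_inv (g : GroupCompletion M) : ∃ h, g * h = 1 := by
  induction g using Localization.induction_on with
  | H p =>
    refine ⟨Localization.mk p.2 ⟨p.1, Submonoid.mem_top _⟩, ?_⟩
    rw [Localization.mk_mul]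
    have : (p.1 : M) * p.2 =
        ((p.2 * ⟨p.1, Submonoid.mem_top _⟩ : (⊤ : Submonoid M)) : M) := by
      simp [mul_comm]
    rw [this]
    exact Localization.mk_self _

lemma isUnit_single_gc (g : GroupCompletion M) :
    IsUnit (MonoidAlgebra.single g (1 : ℤ)) := by
  obtain ⟨h, hh⟩ := gc_exists_inv M g
  refine ⟨⟨MonoidAlgebra.single g 1, MonoidAlgebra.single h 1, ?_, ?_⟩, rfl⟩
  · rw [MonoidAlgebra.single_mul_single, hh, one_mul, MonoidAlgebra.one_def]
  · rw [MonoidAlgebra.single_mul_single, mul_comm h g, hh, one_mul, MonoidAlgebra.one_def]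

/-- The submonoid of monomials `single m 1` in `ℤ[M]`. -/
noncomputable def monomialSubmonoid : Submonoid (MonoidAlgebra ℤ M) :=
  MonoidHom.mrange (MonoidAlgebra.of ℤ M)

lemma toGroupCompletion_apply (m : M) :
    toGroupCompletion M m = Localization.mk m 1 := rfl

theorem isLocalization_gc
    (hinj : Function.Injective (toGroupCompletion M)) :
    letI : Algebra (MonoidAlgebra ℤ M) (MonoidAlgebra ℤ (GroupCompletion M)) :=
      (MonoidAlgebra.mapDomainRingHom ℤ (toGroupCompletion M)).toAlgebra
    IsLocalization (monomialSubmonoid M) (MonoidAlgebra ℤ (GroupCompletion M)) := by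
  letI : Algebra (MonoidAlgebra ℤ M) (MonoidAlgebra ℤ (GroupCompletion M)) :=
    (MonoidAlgebra.mapDomainRingHom ℤ (toGroupCompletion M)).toAlgebra
  have halg : ∀ x : MonoidAlgebra ℤ M,
      algebraMap (MonoidAlgebra ℤ M) (MonoidAlgebra ℤ (GroupCompletion M)) x
        = MonoidAlgebra.mapDomain (toGroupCompletion M) x := fun _ => rfl
  have halg_single : ∀ (m : M) (c : ℤ),
      algebraMap (MonoidAlgebra ℤ M) (MonoidAlgebra ℤ (GroupCompletion M))
        (MonoidAlgebra.single m c)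
        = MonoidAlgebra.single (toGroupCompletion M m) c := fun m c =>
    MonoidAlgebra.mapDomain_single
  constructor
  constructor
  · rintro ⟨s, m, rfl⟩
    show IsUnit ((algebraMap (MonoidAlgebra ℤ M) (MonoidAlgebra ℤ (GroupCompletion M)))
      ((MonoidAlgebra.of ℤ M) m))
    rw [show ((MonoidAlgebra.of ℤ M) m) = MonoidAlgebra.single m 1 from rfl, halg_single]
    exact isUnit_single_gc M _
  · intro z
    induction z using MonoidAlgebra.induction_linear with
    | zero => exact ⟨(0, 1), by simp⟩
    | add f g hf hg =>
      obtain ⟨⟨r₁, s₁⟩, h₁⟩ := hf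
      obtain ⟨⟨r₂, s₂⟩, h₂⟩ := hg
      refine ⟨(r₁ * s₂ + r₂ * s₁, s₁ * s₂), ?_⟩
      simp only [map_add, map_mul, Submonoid.coe_mul]
      linear_combination
        (algebraMap (MonoidAlgebra ℤ M) (MonoidAlgebra ℤ (GroupCompletion M)) (s₂ : MonoidAlgebra ℤ M)) * h₁ +
        (algebraMap (MonoidAlgebra ℤ M) (MonoidAlgebra ℤ (GroupCompletion M)) (s₁ : MonoidAlgebra ℤ M)) * h₂
    | single g c =>
      induction g using Localization.induction_on with
      | H p =>
        refine ⟨(MonoidAlgebra.single p.1 c,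
          ⟨MonoidAlgebra.single (p.2 : M) 1, (p.2 : M), rfl⟩), ?_⟩
        rw [halg_single, halg_single, MonoidAlgebra.single_mul_single, mul_one,
          toGroupCompletion_apply, toGroupCompletion_apply, Localization.mk_mul]
        congr 1
        rw [Localization.mk_eq_mk_iff, Localization.r_iff_exists]
        exact ⟨1, by simp [mul_comm]⟩
  · intro x y h
    refine ⟨1, ?_⟩
    rw [halg, halg] at h
    rw [MonoidAlgebra.mapDomain_injective hinj h]

end Aux

lemma toGroupCompletion_injective_nonzero (A : Type*) [CommRing A] [IsDomain A] :
    Function.Injective (toGroupCompletion (nonzeroSubmonoid A)) := by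
  intro m m' h
  rw [toGroupCompletion_apply, toGroupCompletion_apply, Localization.mk_eq_mk_iff,
    Localization.r_iff_exists] at h
  obtain ⟨u, hu⟩ := h
  simp only [OneMemClass.coe_one, mul_one, one_mul] at hu
  have : ((u : nonzeroSubmonoid A) : A) * m = ((u : nonzeroSubmonoid A) : A) * m' := by
    exact_mod_cast congrArg (Subtype.val) hu
  exact Subtype.ext (mul_left_cancel₀ (u : nonzeroSubmonoid A).2 this)

/-- For an integral domain `A` with `M = A ∖ {0}`, the canonical map
`A → ℤ[M^gp] ⊗_{ℤ[M]} A` exhibits the tensor product as a fraction field of `A`. -/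
theorem prelog_localization_of_domain_is_fraction_field (A : Type*) [CommRing A] [IsDomain A] :
    letI : Algebra (MonoidAlgebra ℤ (nonzeroSubmonoid A)) A :=
      ((MonoidAlgebra.lift ℤ A (nonzeroSubmonoid A)) (nonzeroSubmonoid A).subtype).toRingHom.toAlgebra
    letI : Algebra (MonoidAlgebra ℤ (nonzeroSubmonoid A))
        (MonoidAlgebra ℤ (GroupCompletion (nonzeroSubmonoid A))) :=
      (MonoidAlgebra.mapDomainRingHom ℤ (toGroupCompletion (nonzeroSubmonoid A))).toAlgebra
    letI : Algebra A (MonoidAlgebra ℤ (GroupCompletion (nonzeroSubmonoid A))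
        ⊗[MonoidAlgebra ℤ (nonzeroSubmonoid A)] A) :=
      (Algebra.TensorProduct.includeRight (R := MonoidAlgebra ℤ (nonzeroSubmonoid A))
        (A := MonoidAlgebra ℤ (GroupCompletion (nonzeroSubmonoid A))) (B := A)).toRingHom.toAlgebra
    IsFractionRing A (MonoidAlgebra ℤ (GroupCompletion (nonzeroSubmonoid A))
        ⊗[MonoidAlgebra ℤ (nonzeroSubmonoid A)] A) := by
  letI i1 : Algebra (MonoidAlgebra ℤ (nonzeroSubmonoid A)) A :=
    ((MonoidAlgebra.lift ℤ A (nonzeroSubmonoid A)) (nonzeroSubmonoid A).subtype).toRingHom.toAlgebra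
  letI i2 : Algebra (MonoidAlgebra ℤ (nonzeroSubmonoid A))
      (MonoidAlgebra ℤ (GroupCompletion (nonzeroSubmonoid A))) :=
    (MonoidAlgebra.mapDomainRingHom ℤ (toGroupCompletion (nonzeroSubmonoid A))).toAlgebra
  letI i3 : Algebra A (MonoidAlgebra ℤ (GroupCompletion (nonzeroSubmonoid A))
      ⊗[MonoidAlgebra ℤ (nonzeroSubmonoid A)] A) :=
    (Algebra.TensorProduct.includeRight (R := MonoidAlgebra ℤ (nonzeroSubmonoid A))
      (A := MonoidAlgebra ℤ (GroupCompletion (nonzeroSubmonoid A))) (B := A)).toRingHom.toAlgebra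
  haveI hloc : IsLocalization (monomialSubmonoid (nonzeroSubmonoid A))
      (MonoidAlgebra ℤ (GroupCompletion (nonzeroSubmonoid A))) :=
    isLocalization_gc (nonzeroSubmonoid A) (toGroupCompletion_injective_nonzero A)
  haveI tower : IsScalarTower (MonoidAlgebra ℤ (nonzeroSubmonoid A)) A
      (MonoidAlgebra ℤ (GroupCompletion (nonzeroSubmonoid A))
        ⊗[MonoidAlgebra ℤ (nonzeroSubmonoid A)] A) :=
    IsScalarTower.of_algebraMap_eq' (RingHom.ext fun r => by
      show (algebraMap (MonoidAlgebra ℤ (nonzeroSubmonoid A))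
          (MonoidAlgebra ℤ (GroupCompletion (nonzeroSubmonoid A))) r) ⊗ₜ (1 : A)
        = (1 : MonoidAlgebra ℤ (GroupCompletion (nonzeroSubmonoid A)))
            ⊗ₜ (algebraMap (MonoidAlgebra ℤ (nonzeroSubmonoid A)) A r)
      rw [Algebra.algebraMap_eq_smul_one
          (A := MonoidAlgebra ℤ (GroupCompletion (nonzeroSubmonoid A))),
        Algebra.algebraMap_eq_smul_one (A := A), TensorProduct.smul_tmul])
  have hbc : IsBaseChange (MonoidAlgebra ℤ (GroupCompletion (nonzeroSubmonoid A)))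
      ((IsScalarTower.toAlgHom (MonoidAlgebra ℤ (nonzeroSubmonoid A)) A
        (MonoidAlgebra ℤ (GroupCompletion (nonzeroSubmonoid A))
          ⊗[MonoidAlgebra ℤ (nonzeroSubmonoid A)] A)).toLinearMap) := by
    have h := TensorProduct.isBaseChange (MonoidAlgebra ℤ (nonzeroSubmonoid A)) A
      (MonoidAlgebra ℤ (GroupCompletion (nonzeroSubmonoid A)))
    have heq : (TensorProduct.mk (MonoidAlgebra ℤ (nonzeroSubmonoid A))
          (MonoidAlgebra ℤ (GroupCompletion (nonzeroSubmonoid A))) A 1) =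
        (IsScalarTower.toAlgHom (MonoidAlgebra ℤ (nonzeroSubmonoid A)) A
          (MonoidAlgebra ℤ (GroupCompletion (nonzeroSubmonoid A))
            ⊗[MonoidAlgebra ℤ (nonzeroSubmonoid A)] A)).toLinearMap := by
      ext a; rfl
    rwa [heq] at h
  haveI hlm : IsLocalizedModule (monomialSubmonoid (nonzeroSubmonoid A))
      ((IsScalarTower.toAlgHom (MonoidAlgebra ℤ (nonzeroSubmonoid A)) A
        (MonoidAlgebra ℤ (GroupCompletion (nonzeroSubmonoid A))
          ⊗[MonoidAlgebra ℤ (nonzeroSubmonoid A)] A)).toLinearMap) :=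
    (isLocalizedModule_iff_isBaseChange (monomialSubmonoid (nonzeroSubmonoid A)) _ _).mpr hbc
  haveI hloc2 : IsLocalization
      (Algebra.algebraMapSubmonoid A (monomialSubmonoid (nonzeroSubmonoid A)))
      (MonoidAlgebra ℤ (GroupCompletion (nonzeroSubmonoid A))
        ⊗[MonoidAlgebra ℤ (nonzeroSubmonoid A)] A) :=
    isLocalizedModule_iff_isLocalization.mp hlm
  have halgA : ∀ m : nonzeroSubmonoid A,
      algebraMap (MonoidAlgebra ℤ (nonzeroSubmonoid A)) A
        (MonoidAlgebra.of ℤ (nonzeroSubmonoid A) m) = (m : A) := by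
    intro m
    show (MonoidAlgebra.lift ℤ A (nonzeroSubmonoid A)) (nonzeroSubmonoid A).subtype
      (MonoidAlgebra.single m 1) = (m : A)
    rw [MonoidAlgebra.lift_single, one_smul]
    rfl
  have heq : Algebra.algebraMapSubmonoid A (monomialSubmonoid (nonzeroSubmonoid A))
      = nonZeroDivisors A := by
    ext x
    constructor
    · rintro ⟨y, ⟨m, rfl⟩, rfl⟩
      rw [halgA m]
      exact mem_nonZeroDivisors_of_ne_zero m.2
    · intro hx
      have hx0 : x ≠ 0 := nonZeroDivisors.ne_zero hx
      exact ⟨MonoidAlgebra.of ℤ (nonzeroSubmonoid A) ⟨x, hx0⟩, ⟨⟨x, hx0⟩, rfl⟩, halgA ⟨x, hx0⟩⟩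
  rw [heq] at hloc2
  exact hloc2
end
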